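/- arXiv:1409.7847 — 7 statements merged into one kernel-verified Lean document; each statement's English description precedes it below -/
import Mathlib

section
/- Let V be a finite-dimensional real Hilbert space, M ⊆ V a convex open subset, and f : M → V continuously differentiable such that (i) there exists A₀ ∈ M with Df[A₀] positive definite, and (ii) for all A ∈ M the derivative Df[A] is invertible and self-adjoint. Then ⟨Df[A].H, H⟩ > 0 for all A ∈ M and all nonzero H ∈ V, and consequently f is strictly monotone on M, i.e. ⟨f(A)−f(B), A−B⟩ > 0 for all A ≠ B in M. -/
open scoped RealInnerProductSpace

/-- Lemma 1.1: positive definiteness of a self-adjoint, everywhere invertible derivative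
in a single point of a convex open set implies positive definiteness everywhere, and
hence strict monotonicity. -/
theorem stmt_0 {V : Type*} [NormedAddCommGroup V] [InnerProductSpace ℝ V]
    [FiniteDimensional ℝ V]
    (M : Set V) (hMconv : Convex ℝ M) (hMopen : IsOpen M)
    (f : V → V) (f' : V → V →L[ℝ] V)
    (hderiv : ∀ A ∈ M, HasFDerivAt f (f' A) A)
    (hcont : ContinuousOn f' M)
    (hpos : ∃ A₀ ∈ M, ∀ H : V, H ≠ 0 → 0 < ⟪(f' A₀) H, H⟫)
    (hinv : ∀ A ∈ M, Function.Bijective (f' A))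
    (hsa : ∀ A ∈ M, ∀ H K : V, ⟪(f' A) H, K⟫ = ⟪H, (f' A) K⟫) :
    (∀ A ∈ M, ∀ H : V, H ≠ 0 → 0 < ⟪(f' A) H, H⟫) ∧
      (∀ A ∈ M, ∀ B ∈ M, A ≠ B → 0 < ⟪f A - f B, A - B⟫) := by
  classical
  rcases subsingleton_or_nontrivial V with hV | hV
  · exact ⟨fun A _ H hH => absurd (Subsingleton.elim H 0) hH,
      fun A _ B _ hAB => absurd (Subsingleton.elim A B) hAB⟩
  obtain ⟨A₀, hA₀, hA₀pos⟩ := hpos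
  set S : Set V := Metric.sphere (0 : V) 1 with hSdef
  have hScomp : IsCompact S := isCompact_sphere 0 1
  have hSne : S.Nonempty := NormedSpace.sphere_nonempty.mpr zero_le_one
  have hmemS : ∀ {x : V}, x ∈ S → ‖x‖ = 1 := by
    intro x hx; simpa [hSdef] using hx
  set φ : (V →L[ℝ] V) → ℝ := fun T => sInf ((fun H => ⟪T H, H⟫) '' S) with hφdef
  have hcont_q : ∀ T : V →L[ℝ] V, Continuous fun H : V => ⟪T H, H⟫ :=
    fun T => T.continuous.inner continuous_id
  have hbdd : ∀ T : V →L[ℝ] V, BddBelow ((fun H => ⟪T H, H⟫) '' S) :=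
    fun T => (hScomp.image (hcont_q T)).bddBelow
  have hne : ∀ T : V →L[ℝ] V, ((fun H => ⟪T H, H⟫) '' S).Nonempty := fun T => hSne.image _
  have hφ_le : ∀ T : V →L[ℝ] V, ∀ H ∈ S, φ T ≤ ⟪T H, H⟫ :=
    fun T H hH => csInf_le (hbdd T) ⟨H, hH, rfl⟩
  have hle_φ : ∀ (T : V →L[ℝ] V) (c : ℝ), (∀ H ∈ S, c ≤ ⟪T H, H⟫) → c ≤ φ T := by
    intro T c h
    apply le_csInf (hne T)
    rintro x ⟨H, hH, rfl⟩
    exact h H hH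
  -- φ is 1-Lipschitz
  have key : ∀ T U : V →L[ℝ] V, φ T - φ U ≤ ‖T - U‖ := by
    intro T U
    have h : φ T - ‖T - U‖ ≤ φ U := by
      apply hle_φ
      intro H hH
      have h1 : φ T ≤ ⟪T H, H⟫ := hφ_le T H hH
      have h2 : ⟪T H, H⟫ - ⟪U H, H⟫ = ⟪(T - U) H, H⟫ := by
        simp [inner_sub_left]
      have h3 : ⟪(T - U) H, H⟫ ≤ ‖T - U‖ := by
        have hH1 : ‖H‖ = 1 := hmemS hH
        calc ⟪(T - U) H, H⟫ ≤ ‖(T - U) H‖ * ‖H‖ := real_inner_le_norm _ _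
          _ ≤ (‖T - U‖ * ‖H‖) * ‖H‖ :=
              mul_le_mul_of_nonneg_right ((T - U).le_opNorm H) (norm_nonneg _)
          _ = ‖T - U‖ := by rw [hH1]; ring
      linarith
    linarith
  have hφlip : LipschitzWith 1 φ := by
    apply LipschitzWith.of_dist_le_mul
    intro T U
    rw [NNReal.coe_one, one_mul, Real.dist_eq, abs_sub_le_iff, dist_eq_norm]
    refine ⟨key T U, ?_⟩
    have := key U T
    rwa [norm_sub_rev] at this
  have hφcont : ContinuousOn (fun A => φ (f' A)) M :=
    hφlip.continuous.comp_continuousOn hcont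
  -- minimum attained
  have hattain : ∀ T : V →L[ℝ] V, ∃ H₀ ∈ S, φ T = ⟪T H₀, H₀⟫ := by
    intro T
    obtain ⟨H₀, hH₀S, hmin⟩ := hScomp.exists_isMinOn hSne (hcont_q T).continuousOn
    exact ⟨H₀, hH₀S, le_antisymm (hφ_le T H₀ hH₀S) (hle_φ T _ hmin)⟩
  -- psd + zero on a vector implies kernel vector
  have psd_zero : ∀ T : V →L[ℝ] V, (∀ x y, ⟪T x, y⟫ = ⟪x, T y⟫) →
      (∀ x, 0 ≤ ⟪T x, x⟫) → ∀ x, ⟪T x, x⟫ = 0 → T x = 0 := by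
    intro T hsym hpsd x hx
    have horth : ∀ y, ⟪T x, y⟫ = 0 := by
      intro y
      have ha : (0:ℝ) ≤ ⟪T y, y⟫ := hpsd y
      have hq : ∀ t : ℝ, 0 ≤ ⟪T y, y⟫ * t ^ 2 + 2 * ⟪T x, y⟫ * t := by
        intro t
        have h0 := hpsd (x + t • y)
        have hyx : ⟪T y, x⟫ = ⟪T x, y⟫ := by
          rw [hsym y x, real_inner_comm]
        have expand : ⟪T (x + t • y), x + t • y⟫
            = ⟪T x, x⟫ + t * ⟪T x, y⟫ + t * ⟪T y, x⟫ + t ^ 2 * ⟪T y, y⟫ := by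
          rw [map_add, map_smul]
          simp [inner_add_left, inner_add_right, real_inner_smul_left,
            real_inner_smul_right]
          ring
        rw [expand, hx, hyx] at h0
        nlinarith [h0]
      by_contra hb
      have hb2 : 0 < ⟪T x, y⟫ ^ 2 := by positivity
      have hpos1 : (0:ℝ) < ⟪T y, y⟫ + 1 := by linarith
      have ht := hq (-(2 * ⟪T x, y⟫) / (⟪T y, y⟫ + 1))
      have e : ⟪T y, y⟫ * (-(2 * ⟪T x, y⟫) / (⟪T y, y⟫ + 1)) ^ 2
          + 2 * ⟪T x, y⟫ * (-(2 * ⟪T x, y⟫) / (⟪T y, y⟫ + 1))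
          = -4 * ⟪T x, y⟫ ^ 2 / (⟪T y, y⟫ + 1) ^ 2 := by
        field_simp
        ring
      rw [e] at ht
      have hlt : (0:ℝ) < 4 * ⟪T x, y⟫ ^ 2 / (⟪T y, y⟫ + 1) ^ 2 := by positivity
      have : -4 * ⟪T x, y⟫ ^ 2 / (⟪T y, y⟫ + 1) ^ 2
          = -(4 * ⟪T x, y⟫ ^ 2 / (⟪T y, y⟫ + 1) ^ 2) := by ring
      rw [this] at ht
      linarith
    have : ⟪T x, T x⟫ = 0 := horth (T x)
    exact inner_self_eq_zero.mp this
  -- unit scaling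
  have hscale : ∀ (T : V →L[ℝ] V) (x : V), x ≠ 0 →
      ⟪T (‖x‖⁻¹ • x), ‖x‖⁻¹ • x⟫ = ‖x‖⁻¹ * ‖x‖⁻¹ * ⟪T x, x⟫ := by
    intro T x hx
    rw [map_smul, real_inner_smul_left, real_inner_smul_right]
    ring
  have hmemscale : ∀ x : V, x ≠ 0 → ‖x‖⁻¹ • x ∈ S := by
    intro x hx
    have hnx : ‖x‖ ≠ 0 := norm_ne_zero_iff.mpr hx
    simp [hSdef, norm_smul, abs_of_nonneg (norm_nonneg x), inv_mul_cancel₀ hnx]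
  -- φ (f' A) ≠ 0 on M
  have hmne : ∀ A ∈ M, φ (f' A) ≠ 0 := by
    intro A hA h0
    obtain ⟨H₀, hH₀S, hval⟩ := hattain (f' A)
    have hpsd : ∀ x, 0 ≤ ⟪f' A x, x⟫ := by
      intro x
      rcases eq_or_ne x 0 with rfl | hx
      · simp
      · have h1 : φ (f' A) ≤ ⟪f' A (‖x‖⁻¹ • x), ‖x‖⁻¹ • x⟫ :=
          hφ_le (f' A) _ (hmemscale x hx)
        rw [h0, hscale (f' A) x hx] at h1
        have hc : (0:ℝ) < ‖x‖⁻¹ := inv_pos.mpr (norm_pos_iff.mpr hx)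
        nlinarith [mul_pos hc hc]
    have hT0 : f' A H₀ = 0 :=
      psd_zero (f' A) (hsa A hA) hpsd H₀ (by rw [← hval, h0])
    have hH₀0 : H₀ = 0 := (hinv A hA).1 (by simp [hT0])
    have : ‖H₀‖ = 1 := hmemS hH₀S
    rw [hH₀0] at this
    simp at this
  -- φ (f' A₀) > 0
  have hm0 : 0 < φ (f' A₀) := by
    obtain ⟨H₀, hH₀S, hval⟩ := hattain (f' A₀)
    rw [hval]
    apply hA₀pos
    intro h
    have := hmemS hH₀S
    rw [h] at this
    simp at this
  -- IVT: φ (f' A) > 0 everywhere on M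
  have hmpos : ∀ A ∈ M, 0 < φ (f' A) := by
    intro A hA
    by_contra hle
    push_neg at hle
    have himage : IsPreconnected ((fun B => φ (f' B)) '' M) :=
      hMconv.isPreconnected.image _ hφcont
    have hoc := himage.ordConnected
    have h0mem : (0:ℝ) ∈ (fun B => φ (f' B)) '' M :=
      hoc.out ⟨A, hA, rfl⟩ ⟨A₀, hA₀, rfl⟩ ⟨hle, le_of_lt hm0⟩
    obtain ⟨B, hB, hB0⟩ := h0mem
    exact hmne B hB hB0
  -- part 1
  have part1 : ∀ A ∈ M, ∀ H : V, H ≠ 0 → 0 < ⟪(f' A) H, H⟫ := by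
    intro A hA H hH
    have h1 : 0 < ⟪f' A (‖H‖⁻¹ • H), ‖H‖⁻¹ • H⟫ :=
      lt_of_lt_of_le (hmpos A hA) (hφ_le (f' A) _ (hmemscale H hH))
    rw [hscale (f' A) H hH] at h1
    have hc : (0:ℝ) < ‖H‖⁻¹ := inv_pos.mpr (norm_pos_iff.mpr hH)
    nlinarith [mul_pos hc hc]
  refine ⟨part1, ?_⟩
  -- part 2: strict monotonicity
  intro A hA B hB hAB
  have hABne : A - B ≠ 0 := sub_ne_zero.mpr hAB
  set γ : ℝ → V := fun t => B + t • (A - B) with hγdef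
  have hγmem : ∀ t ∈ Set.Icc (0:ℝ) 1, γ t ∈ M := fun t ht =>
    hMconv.add_smul_sub_mem hB hA ht
  set g : ℝ → ℝ := fun t => ⟪A - B, f (γ t)⟫ with hgdef
  have hgderiv : ∀ t ∈ Set.Icc (0:ℝ) 1, HasDerivAt g ⟪A - B, f' (γ t) (A - B)⟫ t := by
    intro t ht
    have h1 : HasDerivAt γ (A - B) t := by
      simpa [hγdef] using ((hasDerivAt_id t).smul_const (A - B)).const_add B
    have h2 : HasDerivAt (fun s => f (γ s)) (f' (γ t) (A - B)) t :=
      (hderiv _ (hγmem t ht)).comp_hasDerivAt t h1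
    have h3 := (innerSL ℝ (A - B)).hasFDerivAt.comp_hasDerivAt t h2
    simp only [Function.comp_def, innerSL_apply_apply] at h3
    exact h3
  have hgcont : ContinuousOn g (Set.Icc 0 1) := fun t ht =>
    ((hgderiv t ht).continuousAt).continuousWithinAt
  have hmono : StrictMonoOn g (Set.Icc (0:ℝ) 1) := by
    apply strictMonoOn_of_deriv_pos (convex_Icc 0 1) hgcont
    intro t ht
    rw [interior_Icc] at ht
    have ht' : t ∈ Set.Icc (0:ℝ) 1 := ⟨le_of_lt ht.1, le_of_lt ht.2⟩
    rw [(hgderiv t ht').deriv]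
    rw [real_inner_comm]
    exact part1 _ (hγmem t ht') _ hABne
  have h01 := hmono (Set.left_mem_Icc.mpr zero_le_one) (Set.right_mem_Icc.mpr zero_le_one)
    zero_lt_one
  have hg0 : g 0 = ⟪A - B, f B⟫ := by simp [hgdef, hγdef]
  have hg1 : g 1 = ⟪A - B, f A⟫ := by simp [hgdef, hγdef]
  rw [hg0, hg1] at h01
  rw [real_inner_comm, inner_sub_right]
  linarith
end

section
/- Let f : ℝ → ℝ be continuously differentiable. Then the primary matrix function f : Sym(n) → Sym(n) is Hilbert-space monotone, i.e. ⟨f(A)−f(B), A−B⟩ ≥ 0 for all A, B ∈ Sym(n), if and only if f is monotone (nondecreasing) on ℝ. -/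
open Matrix

private lemma key_trace_nonneg {n : ℕ} (f : ℝ → ℝ) (hmono : Monotone f)
    (R : Matrix (Fin n) (Fin n) ℝ) (h1 : R * Rᵀ = 1) (h2 : Rᵀ * R = 1)
    (a b : Fin n → ℝ) :
    0 ≤ ((diagonal (f ∘ a) - R * diagonal (f ∘ b) * Rᵀ) *
        (diagonal a - R * diagonal b * Rᵀ)).trace := by
  have hrow : ∀ i, ∑ j, R i j * R i j = 1 := by
    intro i
    have := congrFun (congrFun h1 i) i
    simpa [Matrix.mul_apply, Matrix.one_apply] using this
  have hcol : ∀ j, ∑ i, R i j * R i j = 1 := by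
    intro j
    have := congrFun (congrFun h2 j) j
    simpa [Matrix.mul_apply, Matrix.one_apply] using this
  have e1 : ((diagonal (f ∘ a)) * (diagonal a)).trace = ∑ i, f (a i) * a i := by
    rw [diagonal_mul_diagonal, trace_diagonal]; simp
  have e2 : ((diagonal (f ∘ a)) * (R * diagonal b * Rᵀ)).trace
      = ∑ i, ∑ j, f (a i) * (b j * (R i j * R i j)) := by
    simp only [Matrix.trace, Matrix.diag, Matrix.diagonal_mul, Function.comp_apply]
    congr 1; ext i
    rw [Matrix.mul_apply, Finset.mul_sum]
    congr 1; ext j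
    rw [Matrix.mul_diagonal, Matrix.transpose_apply]
    ring
  have e3 : ((R * diagonal (f ∘ b) * Rᵀ) * (diagonal a)).trace
      = ∑ i, ∑ j, a i * (f (b j) * (R i j * R i j)) := by
    simp only [Matrix.trace, Matrix.diag, Matrix.mul_diagonal, Function.comp_apply]
    congr 1; ext i
    rw [Matrix.mul_apply, Finset.sum_mul]
    congr 1; ext j
    rw [Matrix.mul_diagonal, Matrix.transpose_apply]
    simp only [Function.comp_apply]; ring
  have e4 : ((R * diagonal (f ∘ b) * Rᵀ) * (R * diagonal b * Rᵀ)).trace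
      = ∑ j, f (b j) * b j := by
    rw [Matrix.trace_mul_comm, ← Matrix.mul_assoc, ← Matrix.mul_assoc,
      Matrix.mul_assoc (R * diagonal b) Rᵀ R, h2, Matrix.mul_one,
      Matrix.trace_mul_comm, ← Matrix.mul_assoc, ← Matrix.mul_assoc, h2, Matrix.one_mul,
      diagonal_mul_diagonal, trace_diagonal]
    simp [mul_comm]
  have ha' : ∑ i, f (a i) * a i = ∑ i, ∑ j, f (a i) * a i * (R i j * R i j) := by
    simp_rw [← Finset.mul_sum, hrow, mul_one]
  have hb' : ∑ j, f (b j) * b j = ∑ i, ∑ j, f (b j) * b j * (R i j * R i j) := by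
    rw [Finset.sum_comm]
    simp_rw [← Finset.mul_sum, hcol, mul_one]
  have main : ((diagonal (f ∘ a) - R * diagonal (f ∘ b) * Rᵀ) *
        (diagonal a - R * diagonal b * Rᵀ)).trace
      = ∑ i, ∑ j, (R i j * R i j) * ((f (a i) - f (b j)) * (a i - b j)) := by
    rw [Matrix.sub_mul, Matrix.mul_sub, Matrix.mul_sub, Matrix.trace_sub, Matrix.trace_sub,
      Matrix.trace_sub, e1, e2, e3, e4, ha', hb']
    simp only [← Finset.sum_sub_distrib]
    refine Finset.sum_congr rfl fun i _ => Finset.sum_congr rfl fun j _ => by ring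
  rw [main]
  refine Finset.sum_nonneg fun i _ => Finset.sum_nonneg fun j _ => ?_
  refine mul_nonneg (mul_self_nonneg _) ?_
  rcases le_total (a i) (b j) with h | h
  · have := hmono h; nlinarith
  · have := hmono h; nlinarith

/-- A primary matrix function induced by a continuously differentiable `f : ℝ → ℝ` is
Hilbert-space monotone on the symmetric matrices if and only if `f` is nondecreasing. -/
theorem stmt_5 {n : ℕ} (hn : 0 < n) (f : ℝ → ℝ) (hf : ContDiff ℝ 1 f)
    (fm : Matrix (Fin n) (Fin n) ℝ → Matrix (Fin n) (Fin n) ℝ)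
    (hfm : ∀ (Q : Matrix (Fin n) (Fin n) ℝ) (d : Fin n → ℝ), Qᵀ * Q = 1 →
      fm (Qᵀ * Matrix.diagonal d * Q) = Qᵀ * Matrix.diagonal (f ∘ d) * Q) :
    (∀ A B : Matrix (Fin n) (Fin n) ℝ, A.IsSymm → B.IsSymm →
      0 ≤ ((fm A - fm B) * (A - B)).trace) ↔ Monotone f := by
  have hdiag : ∀ d : Fin n → ℝ, fm (diagonal d) = diagonal (f ∘ d) := by
    intro d
    have := hfm 1 d (by simp)
    simpa using this
  constructor
  · intro H
    intro x y hxy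
    rcases eq_or_lt_of_le hxy with rfl | hlt
    · exact le_rfl
    have h := H (diagonal fun _ => y) (diagonal fun _ => x)
      (Matrix.isSymm_diagonal _) (Matrix.isSymm_diagonal _)
    rw [hdiag, hdiag] at h
    simp [Matrix.sub_mul, Matrix.mul_sub, Matrix.trace_sub, diagonal_mul_diagonal,
      Matrix.trace_diagonal, Finset.sum_const, Function.comp] at h
    have hn' : (0:ℝ) < n := by exact_mod_cast hn
    by_contra hc
    push_neg at hc
    have ht : (f y - f x) * (y - x) < 0 :=
      mul_neg_of_neg_of_pos (by linarith) (by linarith)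
    have := mul_neg_of_pos_of_neg hn' ht
    linarith
  · intro hmono A B hA hB
    have hA' : A.IsHermitian := by
      rwa [Matrix.IsHermitian, Matrix.conjTranspose_eq_transpose_of_trivial]
    have hB' : B.IsHermitian := by
      rwa [Matrix.IsHermitian, Matrix.conjTranspose_eq_transpose_of_trivial]
    set U : Matrix (Fin n) (Fin n) ℝ := (hA'.eigenvectorUnitary : Matrix (Fin n) (Fin n) ℝ)
      with hU
    set V : Matrix (Fin n) (Fin n) ℝ := (hB'.eigenvectorUnitary : Matrix (Fin n) (Fin n) ℝ)
      with hV
    set a : Fin n → ℝ := hA'.eigenvalues with haa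
    set b : Fin n → ℝ := hB'.eigenvalues with hbb
    have hstarU : star U = Uᵀ := by
      rw [Matrix.star_eq_conjTranspose, Matrix.conjTranspose_eq_transpose_of_trivial]
    have hstarV : star V = Vᵀ := by
      rw [Matrix.star_eq_conjTranspose, Matrix.conjTranspose_eq_transpose_of_trivial]
    have hU1 : U * Uᵀ = 1 := by
      rw [← hstarU]
      exact Matrix.mem_unitaryGroup_iff.mp hA'.eigenvectorUnitary.2
    have hU2 : Uᵀ * U = 1 := by
      rw [← hstarU]
      exact Matrix.mem_unitaryGroup_iff'.mp hA'.eigenvectorUnitary.2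
    have hV1 : V * Vᵀ = 1 := by
      rw [← hstarV]
      exact Matrix.mem_unitaryGroup_iff.mp hB'.eigenvectorUnitary.2
    have hV2 : Vᵀ * V = 1 := by
      rw [← hstarV]
      exact Matrix.mem_unitaryGroup_iff'.mp hB'.eigenvectorUnitary.2
    have hAeq : A = U * diagonal a * Uᵀ := by
      have := hA'.spectral_theorem
      rw [Unitary.conjStarAlgAut_apply, ← hU, hstarU] at this
      simpa using this
    have hBeq : B = V * diagonal b * Vᵀ := by
      have := hB'.spectral_theorem
      rw [Unitary.conjStarAlgAut_apply, ← hV, hstarV] at this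
      simpa using this
    have hfmA : fm A = U * diagonal (f ∘ a) * Uᵀ := by
      have := hfm Uᵀ a (by rw [Matrix.transpose_transpose]; exact hU1)
      rw [Matrix.transpose_transpose] at this
      rw [hAeq, this]
    have hfmB : fm B = V * diagonal (f ∘ b) * Vᵀ := by
      have := hfm Vᵀ b (by rw [Matrix.transpose_transpose]; exact hV1)
      rw [Matrix.transpose_transpose] at this
      rw [hBeq, this]
    set R : Matrix (Fin n) (Fin n) ℝ := Uᵀ * V with hR
    have hRT : Rᵀ = Vᵀ * U := by
      rw [hR, Matrix.transpose_mul, Matrix.transpose_transpose]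
    have hR1 : R * Rᵀ = 1 := by
      rw [hR, hRT, Matrix.mul_assoc, ← Matrix.mul_assoc V Vᵀ U, hV1, Matrix.one_mul, hU2]
    have hR2 : Rᵀ * R = 1 := by
      rw [hR, hRT, Matrix.mul_assoc, ← Matrix.mul_assoc U Uᵀ V, hU1, Matrix.one_mul, hV2]
    have conjB : ∀ d : Fin n → ℝ, U * (R * diagonal d * Rᵀ) * Uᵀ = V * diagonal d * Vᵀ := by
      intro d
      rw [hR, hRT]
      simp only [← Matrix.mul_assoc]
      rw [hU1, Matrix.one_mul, Matrix.mul_assoc (V * diagonal d * Vᵀ) U Uᵀ, hU1,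
        Matrix.mul_one]
    have e1 : fm A - fm B = U * (diagonal (f ∘ a) - R * diagonal (f ∘ b) * Rᵀ) * Uᵀ := by
      rw [hfmA, hfmB, Matrix.mul_sub, Matrix.sub_mul, conjB]
    have e2 : A - B = U * (diagonal a - R * diagonal b * Rᵀ) * Uᵀ := by
      rw [hAeq, hBeq, Matrix.mul_sub, Matrix.sub_mul, conjB]
    rw [e1, e2]
    have tr_eq : (U * (diagonal (f ∘ a) - R * diagonal (f ∘ b) * Rᵀ) * Uᵀ *
          (U * (diagonal a - R * diagonal b * Rᵀ) * Uᵀ)).trace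
        = ((diagonal (f ∘ a) - R * diagonal (f ∘ b) * Rᵀ) *
          (diagonal a - R * diagonal b * Rᵀ)).trace := by
      set X := diagonal (f ∘ a) - R * diagonal (f ∘ b) * Rᵀ
      set Y := diagonal a - R * diagonal b * Rᵀ
      rw [Matrix.trace_mul_comm]
      simp only [← Matrix.mul_assoc]
      rw [Matrix.mul_assoc (U * Y) Uᵀ U, hU2, Matrix.mul_one, Matrix.trace_mul_comm]
      simp only [← Matrix.mul_assoc]
      rw [hU2, Matrix.one_mul]
      exact Matrix.trace_mul_comm Y X
    rw [tr_eq]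
    exact key_trace_nonneg f hmono R hR1 hR2 a b
end

section
/- Let f : ℝ → ℝ be analytic with f'(t) > 0 for all t. Then the primary matrix function f : Sym(n) → Sym(n) is strictly Hilbert-space monotone: ⟨f(A)−f(B), A−B⟩ > 0 for all A ≠ B ∈ Sym(n). -/
open Matrix Finset

lemma exists_diag {n : ℕ} (A : Matrix (Fin n) (Fin n) ℝ) (hA : A.IsSymm) :
    ∃ (Q : Matrix (Fin n) (Fin n) ℝ) (d : Fin n → ℝ),
      Qᵀ * Q = 1 ∧ Q * Qᵀ = 1 ∧ A = Qᵀ * Matrix.diagonal d * Q := by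
  have hH : A.IsHermitian := by
    rwa [Matrix.IsHermitian, Matrix.conjTranspose_eq_transpose_of_trivial]
  set U : Matrix (Fin n) (Fin n) ℝ := (hH.eigenvectorUnitary : Matrix (Fin n) (Fin n) ℝ)
  have hU : U ∈ Matrix.unitaryGroup (Fin n) ℝ := (hH.eigenvectorUnitary).2
  have h1 : star U * U = 1 := hU.1
  have h2 : U * star U = 1 := hU.2
  have hsU : star U = Uᵀ := by
    simp [star, Matrix.conjTranspose_eq_transpose_of_trivial]
  refine ⟨Uᵀ, hH.eigenvalues, ?_, ?_, ?_⟩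
  · rw [Matrix.transpose_transpose, ← hsU]; exact h2
  · rw [Matrix.transpose_transpose, ← hsU]; exact h1
  · have := hH.spectral_theorem
    rw [Unitary.conjStarAlgAut_apply] at this
    rw [hsU] at this
    rw [Matrix.transpose_transpose]
    simpa using this

lemma trace_key {n : ℕ} (Q R : Matrix (Fin n) (Fin n) ℝ) (x y : Fin n → ℝ) :
    ((Qᵀ * Matrix.diagonal x * Q) * (Rᵀ * Matrix.diagonal y * R)).trace
      = ∑ i, ∑ j, ((Q * Rᵀ) i j)^2 * (x i * y j) := by
  have h1 : (Qᵀ * Matrix.diagonal x * Q) * (Rᵀ * Matrix.diagonal y * R)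
      = Qᵀ * (Matrix.diagonal x * Q * Rᵀ * Matrix.diagonal y * R) := by
    simp [Matrix.mul_assoc]
  rw [h1, Matrix.trace_mul_comm]
  have h2 : Matrix.diagonal x * Q * Rᵀ * Matrix.diagonal y * R * Qᵀ
      = Matrix.diagonal x * (Q * Rᵀ) * Matrix.diagonal y * (Q * Rᵀ)ᵀ := by
    simp [Matrix.mul_assoc, Matrix.transpose_mul]
  rw [h2]
  set S := Q * Rᵀ with hS
  have hT : ∀ i j, (Matrix.diagonal x * S * Matrix.diagonal y) i j = x i * S i j * y j := by
    intro i j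
    rw [Matrix.mul_diagonal, Matrix.diagonal_mul]
  rw [Matrix.trace]
  simp only [Matrix.diag, Matrix.mul_apply, hT]
  refine Finset.sum_congr rfl fun i _ => Finset.sum_congr rfl fun j _ => ?_
  simp only [Matrix.transpose_apply]
  ring

lemma key {n : ℕ} (Q₁ Q₂ : Matrix (Fin n) (Fin n) ℝ)
    (h₁ : Q₁ᵀ * Q₁ = 1) (h₁' : Q₁ * Q₁ᵀ = 1)
    (h₂ : Q₂ᵀ * Q₂ = 1) (h₂' : Q₂ * Q₂ᵀ = 1) (x y u v : Fin n → ℝ) :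
    ((Q₁ᵀ * Matrix.diagonal x * Q₁ - Q₂ᵀ * Matrix.diagonal y * Q₂) *
      (Q₁ᵀ * Matrix.diagonal u * Q₁ - Q₂ᵀ * Matrix.diagonal v * Q₂)).trace
    = ∑ i, ∑ j, ((Q₁ * Q₂ᵀ) i j)^2 * ((x i - y j) * (u i - v j)) := by
  set S := Q₁ * Q₂ᵀ with hS
  have hSt : Q₂ * Q₁ᵀ = Sᵀ := by rw [hS, Matrix.transpose_mul, Matrix.transpose_transpose]
  have hSS : S * Sᵀ = 1 := by
    rw [hS, Matrix.transpose_mul, Matrix.transpose_transpose]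
    calc Q₁ * Q₂ᵀ * (Q₂ * Q₁ᵀ) = Q₁ * (Q₂ᵀ * Q₂) * Q₁ᵀ := by simp [Matrix.mul_assoc]
    _ = 1 := by rw [h₂, Matrix.mul_one, h₁']
  have hStS : Sᵀ * S = 1 := by
    rw [hS, Matrix.transpose_mul, Matrix.transpose_transpose]
    calc Q₂ * Q₁ᵀ * (Q₁ * Q₂ᵀ) = Q₂ * (Q₁ᵀ * Q₁) * Q₂ᵀ := by simp [Matrix.mul_assoc]
    _ = 1 := by rw [h₁, Matrix.mul_one, h₂']
  have hrow : ∀ i, ∑ j, (S i j)^2 = 1 := by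
    intro i
    have := congrFun (congrFun hSS i) i
    simp only [Matrix.mul_apply, Matrix.transpose_apply, Matrix.one_apply_eq] at this
    rw [← this]
    exact Finset.sum_congr rfl fun j _ => (sq (S i j)).symm ▸ rfl
  have hcol : ∀ j, ∑ i, (S i j)^2 = 1 := by
    intro j
    have := congrFun (congrFun hStS j) j
    simp only [Matrix.mul_apply, Matrix.transpose_apply, Matrix.one_apply_eq] at this
    rw [← this]
    exact Finset.sum_congr rfl fun i _ => (sq (S i j)).symm ▸ rfl
  have hone : ∀ (a b : Fin n → ℝ),
      (∑ i, ∑ j, ((1 : Matrix (Fin n) (Fin n) ℝ) i j)^2 * (a i * b j)) = ∑ i, a i * b i := by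
    intro a b
    refine Finset.sum_congr rfl fun i _ => ?_
    simp [Matrix.one_apply, ite_pow, ite_mul]
  rw [sub_mul, mul_sub, mul_sub, Matrix.trace_sub, Matrix.trace_sub, Matrix.trace_sub,
    trace_key, trace_key, trace_key, trace_key, h₁', h₂', hSt, hone, hone, ← hS]
  have htr : (∑ i, ∑ j, (Sᵀ i j)^2 * (y i * u j)) = ∑ i, ∑ j, (S i j)^2 * (u i * y j) := by
    rw [Finset.sum_comm]
    exact Finset.sum_congr rfl fun i _ => Finset.sum_congr rfl fun j _ => by
      simp only [Matrix.transpose_apply]; ring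
  rw [htr]
  have e1 : (∑ i, x i * u i) = ∑ i, ∑ j, (S i j)^2 * (x i * u i) := by
    refine Finset.sum_congr rfl fun i _ => ?_
    rw [← Finset.sum_mul, hrow i, one_mul]
  have e2 : (∑ i, y i * v i) = ∑ i, ∑ j, (S i j)^2 * (y j * v j) := by
    rw [Finset.sum_comm]
    refine Finset.sum_congr rfl fun j _ => ?_
    rw [← Finset.sum_mul, hcol j, one_mul]
  rw [e1, e2]
  simp only [← Finset.sum_sub_distrib, ← Finset.sum_add_distrib]
  refine Finset.sum_congr rfl fun i _ => Finset.sum_congr rfl fun j _ => ?_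
  ring

lemma mono_nonneg {f : ℝ → ℝ} (hm : StrictMono f) (a b : ℝ) :
    0 ≤ (f a - f b) * (a - b) := by
  rcases lt_trichotomy a b with h | h | h
  · have := hm h; nlinarith
  · simp [h]
  · have := hm h; nlinarith

lemma mono_pos {f : ℝ → ℝ} (hm : StrictMono f) {a b : ℝ} (hab : a ≠ b) :
    0 < (f a - f b) * (a - b) := by
  rcases lt_trichotomy a b with h | h | h
  · have := hm h; nlinarith
  · exact absurd h hab
  · have := hm h; nlinarith

/-- If `f : ℝ → ℝ` is analytic with `f' > 0` everywhere, then the induced primary matrix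
function is strictly Hilbert-space monotone on the symmetric matrices. -/
theorem stmt_6 {n : ℕ} (f : ℝ → ℝ) (hf : ∀ t : ℝ, AnalyticAt ℝ f t)
    (hf' : ∀ t : ℝ, 0 < deriv f t)
    (fm : Matrix (Fin n) (Fin n) ℝ → Matrix (Fin n) (Fin n) ℝ)
    (hfm : ∀ (Q : Matrix (Fin n) (Fin n) ℝ) (d : Fin n → ℝ), Qᵀ * Q = 1 →
      fm (Qᵀ * Matrix.diagonal d * Q) = Qᵀ * Matrix.diagonal (f ∘ d) * Q) :
    ∀ A B : Matrix (Fin n) (Fin n) ℝ, A.IsSymm → B.IsSymm → A ≠ B →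
      0 < ((fm A - fm B) * (A - B)).trace := by
  intro A B hA hB hAB
  have hm : StrictMono f := strictMono_of_deriv_pos hf'
  obtain ⟨Q₁, d₁, h₁, h₁', hA'⟩ := exists_diag A hA
  obtain ⟨Q₂, d₂, h₂, h₂', hB'⟩ := exists_diag B hB
  set P : Fin n → Fin n → ℝ := fun i j => ((Q₁ * Q₂ᵀ) i j)^2 with hPdef
  have hfA : fm A = Q₁ᵀ * Matrix.diagonal (f ∘ d₁) * Q₁ := by rw [hA', hfm _ _ h₁]
  have hfB : fm B = Q₂ᵀ * Matrix.diagonal (f ∘ d₂) * Q₂ := by rw [hB', hfm _ _ h₂]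
  have T : ((fm A - fm B) * (A - B)).trace
      = ∑ i, ∑ j, P i j * ((f (d₁ i) - f (d₂ j)) * (d₁ i - d₂ j)) := by
    rw [hfA, hfB]
    nth_rewrite 1 [hA']
    nth_rewrite 1 [hB']
    rw [key Q₁ Q₂ h₁ h₁' h₂ h₂' (f ∘ d₁) (f ∘ d₂) d₁ d₂]
    rfl
  have T2 : ((A - B) * (A - B)).trace
      = ∑ i, ∑ j, P i j * ((d₁ i - d₂ j) * (d₁ i - d₂ j)) := by
    nth_rewrite 1 [hA']; nth_rewrite 1 [hA']
    nth_rewrite 1 [hB']; nth_rewrite 1 [hB']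
    exact key Q₁ Q₂ h₁ h₁' h₂ h₂' d₁ d₂ d₁ d₂
  have hM : 0 < ((A - B) * (A - B)).trace := by
    set M := A - B with hMdef
    have hMs : Mᵀ = M := hA.sub hB
    have hMne : M ≠ 0 := sub_ne_zero.mpr hAB
    obtain ⟨i0, j0, hij⟩ : ∃ i j, M i j ≠ 0 := by
      by_contra h
      push_neg at h
      exact hMne (by ext i j; exact h i j)
    have htr : (M * M).trace = ∑ i, ∑ j, (M i j)^2 := by
      rw [Matrix.trace]
      simp only [Matrix.diag, Matrix.mul_apply]
      refine Finset.sum_congr rfl fun i _ => Finset.sum_congr rfl fun j _ => ?_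
      have : M j i = M i j := congrFun (congrFun hMs i) j
      rw [this, sq]
    rw [htr]
    refine Finset.sum_pos' (fun i _ => Finset.sum_nonneg fun j _ => sq_nonneg _) ⟨i0,
      Finset.mem_univ _, Finset.sum_pos' (fun j _ => sq_nonneg _)
      ⟨j0, Finset.mem_univ _, by positivity⟩⟩
  obtain ⟨i0, j0, hij⟩ : ∃ i j, 0 < P i j * ((d₁ i - d₂ j) * (d₁ i - d₂ j)) := by
    by_contra h
    push_neg at h
    have : ((A - B) * (A - B)).trace ≤ 0 := by
      rw [T2]
      exact Finset.sum_nonpos fun i _ => Finset.sum_nonpos fun j _ => h i j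
    linarith
  have hP0 : 0 < P i0 j0 := by
    rcases (sq_nonneg ((Q₁ * Q₂ᵀ) i0 j0)).lt_or_eq with h | h
    · exact h
    · exfalso; rw [hPdef] at hij; simp only at hij; nlinarith
  have hne : d₁ i0 ≠ d₂ j0 := by
    intro h
    rw [h] at hij
    simp at hij
  rw [T]
  refine Finset.sum_pos' (fun i _ => Finset.sum_nonneg fun j _ =>
      mul_nonneg (sq_nonneg _) (mono_nonneg hm _ _)) ⟨i0, Finset.mem_univ _,
    Finset.sum_pos' (fun j _ => mul_nonneg (sq_nonneg _) (mono_nonneg hm _ _))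
      ⟨j0, Finset.mem_univ _, mul_pos hP0 (mono_pos hm hne)⟩⟩
end

section
/- The matrix exponential is strictly monotone on Sym(n): for all symmetric matrices A ≠ B, ⟨exp(A) − exp(B), A − B⟩ > 0, where ⟨X,Y⟩ = tr(XᵀY). -/
open Matrix

attribute [local instance] Matrix.normedAddCommGroup Matrix.normedSpace

lemma aux_trace_diag {n : ℕ} (a b : Fin n → ℝ) (W : Matrix (Fin n) (Fin n) ℝ) :
    (diagonal a * W * diagonal b * Wᵀ).trace
      = ∑ i, ∑ j, (W i j)^2 * a i * b j := by
  simp only [Matrix.trace, Matrix.diag, Matrix.mul_apply, Matrix.transpose_apply,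
    Matrix.diagonal_apply, ite_mul, mul_ite, zero_mul, mul_zero,
    Finset.sum_ite_eq, Finset.sum_ite_eq', Finset.mem_univ, if_true]
  apply Finset.sum_congr rfl; intro i _
  apply Finset.sum_congr rfl; intro j _
  ring

lemma aux_trace_sandwich {n : ℕ} (U V : Matrix (Fin n) (Fin n) ℝ)
    (a b : Fin n → ℝ) :
    ((U * diagonal a * star U) * (V * diagonal b * star V)).trace
      = ∑ i, ∑ j, ((star U * V) i j)^2 * a i * b j := by
  have hsw : (star U * V)ᵀ = star V * U := by
    simp [Matrix.star_eq_conjTranspose, conjTranspose_eq_transpose_of_trivial,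
      Matrix.transpose_mul]
  have key : (U * diagonal a * star U) * (V * diagonal b * star V)
      = U * (diagonal a * (star U * V) * diagonal b * star V) := by
    simp only [Matrix.mul_assoc]
  have key2 : (diagonal a * (star U * V) * diagonal b * star V) * U
      = diagonal a * (star U * V) * diagonal b * (star V * U) := by
    simp only [Matrix.mul_assoc]
  rw [← aux_trace_diag a b (star U * V), hsw, key, trace_mul_comm, key2]

lemma aux_trace_same {n : ℕ} (U : Matrix (Fin n) (Fin n) ℝ)
    (hU : U ∈ Matrix.unitaryGroup (Fin n) ℝ) (a b : Fin n → ℝ) :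
    ((U * diagonal a * star U) * (U * diagonal b * star U)).trace = ∑ i, a i * b i := by
  rw [aux_trace_sandwich, Matrix.mem_unitaryGroup_iff'.mp hU]
  simp [Matrix.one_apply, sq, ite_mul, mul_ite, Finset.sum_ite_eq, Finset.sum_ite_eq']

lemma aux_row_sum {n : ℕ} (W : Matrix (Fin n) (Fin n) ℝ)
    (hW : W ∈ Matrix.unitaryGroup (Fin n) ℝ) (i : Fin n) :
    ∑ j, (W i j)^2 = 1 := by
  have h1 : W * star W = 1 := Matrix.mem_unitaryGroup_iff.mp hW
  have h2 := congr_fun (congr_fun (congrArg (fun M => (M : Matrix (Fin n) (Fin n) ℝ)) h1) i) i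
  simpa [Matrix.mul_apply, Matrix.star_eq_conjTranspose, Matrix.conjTranspose_apply,
    Matrix.one_apply, sq] using h2

lemma aux_col_sum {n : ℕ} (W : Matrix (Fin n) (Fin n) ℝ)
    (hW : W ∈ Matrix.unitaryGroup (Fin n) ℝ) (j : Fin n) :
    ∑ i, (W i j)^2 = 1 := by
  have h1 : star W * W = 1 := Matrix.mem_unitaryGroup_iff'.mp hW
  have h2 := congr_fun (congr_fun (congrArg (fun M => (M : Matrix (Fin n) (Fin n) ℝ)) h1) j) j
  simpa [Matrix.mul_apply, Matrix.star_eq_conjTranspose, Matrix.conjTranspose_apply,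
    Matrix.one_apply, sq, mul_comm] using h2

lemma aux_expfac_nonneg (x y : ℝ) : 0 ≤ (Real.exp x - Real.exp y) * (x - y) := by
  rcases le_total x y with h | h
  · nlinarith [Real.exp_le_exp.mpr h]
  · exact mul_nonneg (by simp [Real.exp_le_exp, h]) (by linarith)

lemma aux_expfac_pos {x y : ℝ} (h : x ≠ y) : 0 < (Real.exp x - Real.exp y) * (x - y) := by
  rcases lt_or_gt_of_ne h with h | h
  · nlinarith [Real.exp_lt_exp.mpr h]
  · exact mul_pos (by simp [sub_pos, Real.exp_lt_exp, h]) (by linarith)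

/-- The matrix exponential is strictly monotone on the symmetric matrices:
`⟨exp A − exp B, A − B⟩ > 0` for all symmetric `A ≠ B`. -/
theorem stmt_9 {n : ℕ} (A B : Matrix (Fin n) (Fin n) ℝ)
    (hA : A.IsSymm) (hB : B.IsSymm) (hAB : A ≠ B) :
    0 < ((NormedSpace.exp A - NormedSpace.exp B)ᵀ * (A - B)).trace := by
  have hA' : A.IsHermitian := by
    rw [Matrix.IsHermitian, conjTranspose_eq_transpose_of_trivial]; exact hA
  have hB' : B.IsHermitian := by
    rw [Matrix.IsHermitian, conjTranspose_eq_transpose_of_trivial]; exact hB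
  set U : Matrix (Fin n) (Fin n) ℝ := (hA'.eigenvectorUnitary : Matrix (Fin n) (Fin n) ℝ) with hUdef
  set V : Matrix (Fin n) (Fin n) ℝ := (hB'.eigenvectorUnitary : Matrix (Fin n) (Fin n) ℝ) with hVdef
  have hUmem : U ∈ Matrix.unitaryGroup (Fin n) ℝ := hA'.eigenvectorUnitary.2
  have hVmem : V ∈ Matrix.unitaryGroup (Fin n) ℝ := hB'.eigenvectorUnitary.2
  set lam : Fin n → ℝ := hA'.eigenvalues with hlam
  set mu : Fin n → ℝ := hB'.eigenvalues with hmu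
  set W : Matrix (Fin n) (Fin n) ℝ := star U * V with hWdef
  have hWmem : W ∈ Matrix.unitaryGroup (Fin n) ℝ :=
    mul_mem (Unitary.star_mem hUmem) hVmem
  set c : Fin n → Fin n → ℝ := fun i j => (W i j)^2 with hc
  -- decompositions
  have h_A : A = U * diagonal lam * star U := by
    have := hA'.spectral_theorem
    simpa [RCLike.ofReal_real_eq_id] using this
  have h_B : B = V * diagonal mu * star V := by
    have := hB'.spectral_theorem
    simpa [RCLike.ofReal_real_eq_id] using this
  -- exponentials
  have hexp : ∀ (P : Matrix (Fin n) (Fin n) ℝ) (hP : P ∈ Matrix.unitaryGroup (Fin n) ℝ)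
      (v : Fin n → ℝ), NormedSpace.exp (P * diagonal v * star P)
        = P * diagonal (fun i => Real.exp (v i)) * star P := by
    intro P hP v
    have hunit : IsUnit P := ⟨Unitary.toUnits (⟨P, hP⟩ : Matrix.unitaryGroup (Fin n) ℝ), rfl⟩
    have hinv : P⁻¹ = star P :=
      Matrix.inv_eq_left_inv (Matrix.mem_unitaryGroup_iff'.mp hP)
    rw [← hinv, Matrix.exp_conj P _ hunit, Matrix.exp_diagonal, hinv]
    congr 1
    · congr 1
      funext i
      rw [Pi.exp_def, ← Real.exp_eq_exp_ℝ]
  have h_expA : NormedSpace.exp A = U * diagonal (fun i => Real.exp (lam i)) * star U := by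
    rw [h_A]; exact hexp U hUmem lam
  have h_expB : NormedSpace.exp B = V * diagonal (fun i => Real.exp (mu i)) * star V := by
    rw [h_B]; exact hexp V hVmem mu
  -- symmetry of exponentials
  have hsA : (NormedSpace.exp A)ᵀ = NormedSpace.exp A := by
    rw [← Matrix.exp_transpose, hA.eq]
  have hsB : (NormedSpace.exp B)ᵀ = NormedSpace.exp B := by
    rw [← Matrix.exp_transpose, hB.eq]
  -- the four trace identities
  have e1 : (NormedSpace.exp A * A).trace = ∑ i, Real.exp (lam i) * lam i := by
    rw [h_expA]; conv_lhs => rw [h_A]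
    exact aux_trace_same U hUmem _ _
  have e4 : (NormedSpace.exp B * B).trace = ∑ j, Real.exp (mu j) * mu j := by
    rw [h_expB]; conv_lhs => rw [h_B]
    exact aux_trace_same V hVmem _ _
  have e2 : (NormedSpace.exp A * B).trace = ∑ i, ∑ j, c i j * Real.exp (lam i) * mu j := by
    rw [h_expA]; conv_lhs => rw [h_B]
    exact aux_trace_sandwich U V _ _
  have e3 : (NormedSpace.exp B * A).trace = ∑ i, ∑ j, c i j * lam i * Real.exp (mu j) := by
    rw [trace_mul_comm, h_expB]; conv_lhs => rw [h_A]
    exact aux_trace_sandwich U V _ _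
  have f1 : (A * A).trace = ∑ i, lam i * lam i := by
    conv_lhs => rw [h_A]
    exact aux_trace_same U hUmem _ _
  have f4 : (B * B).trace = ∑ j, mu j * mu j := by
    conv_lhs => rw [h_B]
    exact aux_trace_same V hVmem _ _
  have f2 : (A * B).trace = ∑ i, ∑ j, c i j * lam i * mu j := by
    conv_lhs => rw [h_A, h_B]
    exact aux_trace_sandwich U V _ _
  -- converting single sums to double sums
  have conv1 : ∀ g : Fin n → ℝ, ∑ i, g i = ∑ i, ∑ j, c i j * g i := by
    intro g
    refine Finset.sum_congr rfl fun i _ => ?_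
    rw [← Finset.sum_mul, aux_row_sum W hWmem i, one_mul]
  have conv2 : ∀ g : Fin n → ℝ, ∑ j, g j = ∑ i, ∑ j, c i j * g j := by
    intro g
    rw [Finset.sum_comm]
    refine Finset.sum_congr rfl fun j _ => ?_
    rw [← Finset.sum_mul, aux_col_sum W hWmem j, one_mul]
  -- positivity of ∑ c (lam - mu)^2
  have hABtr : 0 < ((A - B)ᵀ * (A - B)).trace := by
    have hM : A - B ≠ 0 := sub_ne_zero_of_ne hAB
    have htr : ((A - B)ᵀ * (A - B)).trace = ∑ j, ∑ i, ((A - B) i j)^2 := by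
      simp [Matrix.trace, Matrix.diag, Matrix.mul_apply, sq]
    rw [htr]
    obtain ⟨i, j, hij⟩ : ∃ i j, (A - B) i j ≠ 0 := by
      by_contra h; push_neg at h
      exact hM (by ext i j; exact h i j)
    refine Finset.sum_pos' (fun j _ => Finset.sum_nonneg fun i _ => sq_nonneg _) ?_
    exact ⟨j, Finset.mem_univ j, Finset.sum_pos'
      (fun i _ => sq_nonneg _) ⟨i, Finset.mem_univ i, by positivity⟩⟩
  have hsum2 : 0 < ∑ i, ∑ j, c i j * (lam i - mu j)^2 := by
    have expand : ∑ i, ∑ j, c i j * (lam i - mu j)^2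
        = ((A - B)ᵀ * (A - B)).trace := by
      rw [transpose_sub, hA.eq, hB.eq, sub_mul, mul_sub, mul_sub, trace_sub, trace_sub,
        trace_sub, f1, f4, f2, trace_mul_comm B A, f2,
        conv1 (fun i => lam i * lam i), conv2 (fun j => mu j * mu j)]
      simp only [← Finset.sum_sub_distrib]
      refine Finset.sum_congr rfl fun i _ => ?_
      refine Finset.sum_congr rfl fun j _ => ?_
      ring
    rw [expand]; exact hABtr
  -- main rewriting
  rw [transpose_sub, hsA, hsB, sub_mul, mul_sub, mul_sub, trace_sub, trace_sub, trace_sub,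
    e1, e2, e3, e4, conv1 (fun i => Real.exp (lam i) * lam i),
    conv2 (fun j => Real.exp (mu j) * mu j)]
  have key : (∑ i, ∑ j, c i j * (Real.exp (lam i) * lam i))
      - (∑ i, ∑ j, c i j * Real.exp (lam i) * mu j)
      - ((∑ i, ∑ j, c i j * lam i * Real.exp (mu j))
        - (∑ i, ∑ j, c i j * (Real.exp (mu j) * mu j)))
      = ∑ i, ∑ j, c i j * ((Real.exp (lam i) - Real.exp (mu j)) * (lam i - mu j)) := by
    simp only [← Finset.sum_sub_distrib]
    refine Finset.sum_congr rfl fun i _ => ?_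
    refine Finset.sum_congr rfl fun j _ => ?_
    ring
  rw [key]
  obtain ⟨i, hi⟩ : ∃ i, 0 < ∑ j, c i j * (lam i - mu j)^2 := by
    by_contra h; push_neg at h
    exact absurd hsum2 (not_lt.mpr (Finset.sum_nonpos fun i _ => h i))
  obtain ⟨j, hj⟩ : ∃ j, 0 < c i j * (lam i - mu j)^2 := by
    by_contra h; push_neg at h
    exact absurd hi (not_lt.mpr (Finset.sum_nonpos fun j _ => h j))
  have hcpos : 0 < c i j := by
    by_contra hle
    push_neg at hle
    have h0 : c i j = 0 := le_antisymm hle (sq_nonneg (W i j))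
    rw [h0, zero_mul] at hj
    exact lt_irrefl 0 hj
  have hne : lam i ≠ mu j := by
    intro h; rw [h] at hj; simp at hj
  refine Finset.sum_pos' (fun i _ => Finset.sum_nonneg fun j _ =>
    mul_nonneg (sq_nonneg _) (aux_expfac_nonneg _ _)) ?_
  refine ⟨i, Finset.mem_univ i, Finset.sum_pos' (fun j _ =>
    mul_nonneg (sq_nonneg _) (aux_expfac_nonneg _ _)) ?_⟩
  exact ⟨j, Finset.mem_univ j, mul_pos hcpos (aux_expfac_pos hne)⟩
end

section
/- The principal matrix logarithm is strictly monotone on PSym(n): for all positive definite symmetric matrices P ≠ Q, ⟨log P − log Q, P − Q⟩ > 0, where ⟨X,Y⟩ = tr(XᵀY). -/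
open Matrix

private lemma key_aux {n : ℕ} (A : Matrix (Fin n) (Fin n) ℝ) (d e : Fin n → ℝ) :
    (diagonal d * A * diagonal e * Aᵀ).trace = ∑ i, ∑ j, d i * e j * (A i j)^2 := by
  have entry : ∀ i j, (diagonal d * A * diagonal e) i j = d i * A i j * e j := by
    intro i j; rw [mul_diagonal, diagonal_mul]
  have : (diagonal d * A * diagonal e * Aᵀ).trace
      = ∑ i, ∑ j, (diagonal d * A * diagonal e) i j * Aᵀ j i := by
    simp [Matrix.trace, Matrix.diag, Matrix.mul_apply]
  rw [this]
  refine Finset.sum_congr rfl fun i _ => Finset.sum_congr rfl fun j _ => ?_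
  rw [entry, transpose_apply]; ring

private lemma key2_aux {n : ℕ} (U V : Matrix (Fin n) (Fin n) ℝ) (d e : Fin n → ℝ) :
    ((Uᵀ * diagonal d * U) * (Vᵀ * diagonal e * V)).trace
      = ∑ i, ∑ j, d i * e j * ((U * Vᵀ) i j)^2 := by
  rw [← key_aux (U * Vᵀ) d e]
  calc ((Uᵀ * diagonal d * U) * (Vᵀ * diagonal e * V)).trace
      = (Uᵀ * (diagonal d * U * (Vᵀ * diagonal e * V))).trace := by
        simp only [Matrix.mul_assoc]
    _ = ((diagonal d * U * (Vᵀ * diagonal e * V)) * Uᵀ).trace := trace_mul_comm _ _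
    _ = (diagonal d * (U * Vᵀ) * diagonal e * (U * Vᵀ)ᵀ).trace := by
        rw [transpose_mul, transpose_transpose]; simp only [Matrix.mul_assoc]

private lemma master_aux {n : ℕ} (U V : Matrix (Fin n) (Fin n) ℝ)
    (hU : Uᵀ * U = 1) (hV : Vᵀ * V = 1) (a b c f : Fin n → ℝ) :
    ((Uᵀ * diagonal a * U - Vᵀ * diagonal b * V) *
     (Uᵀ * diagonal c * U - Vᵀ * diagonal f * V)).trace
    = ∑ i, ∑ j, ((U * Vᵀ) i j)^2 * ((a i - b j) * (c i - f j)) := by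
  have hU' : U * Uᵀ = 1 := mul_eq_one_comm.mp hU
  have hV' : V * Vᵀ = 1 := mul_eq_one_comm.mp hV
  set S := U * Vᵀ with hS
  have hSST : S * Sᵀ = 1 := by
    rw [hS, transpose_mul, transpose_transpose, Matrix.mul_assoc,
      ← Matrix.mul_assoc Vᵀ V, hV, Matrix.one_mul, hU']
  have hSTS : Sᵀ * S = 1 := mul_eq_one_comm.mp hSST
  have rowsum : ∀ i, ∑ j, (S i j)^2 = 1 := by
    intro i
    have : (S * Sᵀ) i i = 1 := by rw [hSST, one_apply_eq]
    rw [Matrix.mul_apply] at this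
    simpa [transpose_apply, pow_two] using this
  have colsum : ∀ j, ∑ i, (S i j)^2 = 1 := by
    intro j
    have : (Sᵀ * S) j j = 1 := by rw [hSTS, one_apply_eq]
    rw [Matrix.mul_apply] at this
    simpa [transpose_apply, pow_two] using this
  rw [Matrix.sub_mul, Matrix.mul_sub, Matrix.mul_sub, trace_sub, trace_sub, trace_sub]
  rw [key2_aux U U a c, key2_aux U V a f, key2_aux V U b c, key2_aux V V b f]
  rw [hU', hV']
  have h11 : (∑ i, ∑ j, a i * c j * ((1 : Matrix (Fin n) (Fin n) ℝ) i j)^2)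
      = ∑ i, ∑ j, (S i j)^2 * (a i * c i) := by
    refine Finset.sum_congr rfl fun i _ => ?_
    have l : (∑ j, a i * c j * ((1 : Matrix (Fin n) (Fin n) ℝ) i j)^2) = a i * c i := by
      simp [one_apply, apply_ite (· ^ 2)]
    rw [l, ← Finset.sum_mul, rowsum i, one_mul]
  have h22 : (∑ i, ∑ j, b i * f j * ((1 : Matrix (Fin n) (Fin n) ℝ) i j)^2)
      = ∑ i, ∑ j, (S i j)^2 * (b j * f j) :=
    calc (∑ i, ∑ j, b i * f j * ((1 : Matrix (Fin n) (Fin n) ℝ) i j)^2)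
        = ∑ j, b j * f j := by simp [one_apply, apply_ite (· ^ 2)]
      _ = ∑ j, ∑ i, (S i j)^2 * (b j * f j) := by
          refine Finset.sum_congr rfl fun j _ => ?_
          rw [← Finset.sum_mul, colsum j, one_mul]
      _ = ∑ i, ∑ j, (S i j)^2 * (b j * f j) := Finset.sum_comm
  have h21 : (∑ i, ∑ j, b i * c j * ((V * Uᵀ) i j)^2)
      = ∑ i, ∑ j, (S i j)^2 * (b j * c i) := by
    have hVU : V * Uᵀ = Sᵀ := by rw [hS, transpose_mul, transpose_transpose]
    rw [hVU, Finset.sum_comm]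
    refine Finset.sum_congr rfl fun i _ => Finset.sum_congr rfl fun j _ => ?_
    rw [transpose_apply]; ring
  rw [h11, h22, h21]
  simp only [← Finset.sum_sub_distrib]
  refine Finset.sum_congr rfl fun i _ => Finset.sum_congr rfl fun j _ => ?_
  ring

private lemma pos_log_aux {a b : ℝ} (ha : 0 < a) (hb : 0 < b) :
    0 ≤ (Real.log a - Real.log b) * (a - b) := by
  rcases le_total a b with h | h
  · have := Real.log_le_log ha h
    nlinarith
  · have := Real.log_le_log hb h
    nlinarith

private lemma eq_of_log_aux {a b : ℝ} (ha : 0 < a) (hb : 0 < b)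
    (h : (Real.log a - Real.log b) * (a - b) = 0) : a = b := by
  rcases lt_trichotomy a b with hl | he | hl
  · have := Real.log_lt_log ha hl; nlinarith
  · exact he
  · have := Real.log_lt_log hb hl; nlinarith

private lemma exists_decomp_aux {n : ℕ} (P : Matrix (Fin n) (Fin n) ℝ) (hP : P.PosDef) :
    ∃ U : Matrix (Fin n) (Fin n) ℝ, ∃ d : Fin n → ℝ, Uᵀ * U = 1 ∧ (∀ i, 0 < d i) ∧
      P = Uᵀ * diagonal d * U := by
  have hH := hP.isHermitian
  refine ⟨star (hH.eigenvectorUnitary : Matrix (Fin n) (Fin n) ℝ), hH.eigenvalues, ?_,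
    hP.eigenvalues_pos, ?_⟩
  · rw [← conjTranspose_eq_transpose_of_trivial, ← star_eq_conjTranspose, star_star]
    exact (Matrix.mem_unitaryGroup_iff).mp hH.eigenvectorUnitary.2
  · rw [← conjTranspose_eq_transpose_of_trivial, ← star_eq_conjTranspose, star_star]
    simpa using hH.spectral_theorem

/-- The principal matrix logarithm (the primary matrix function induced by the real
logarithm) is strictly monotone on the positive definite symmetric matrices:
`⟨log P − log Q, P − Q⟩ > 0` for `P ≠ Q`. -/
theorem stmt_10 {n : ℕ} (mlog : Matrix (Fin n) (Fin n) ℝ → Matrix (Fin n) (Fin n) ℝ)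
    (hmlog : ∀ (Q : Matrix (Fin n) (Fin n) ℝ) (d : Fin n → ℝ), Qᵀ * Q = 1 →
      mlog (Qᵀ * Matrix.diagonal d * Q) = Qᵀ * Matrix.diagonal (Real.log ∘ d) * Q) :
    ∀ P Q : Matrix (Fin n) (Fin n) ℝ, P.PosDef → Q.PosDef → P ≠ Q →
      0 < ((mlog P - mlog Q)ᵀ * (P - Q)).trace := by
  intro P Q hP hQ hne
  obtain ⟨U, lam, hU, hlam, hPd⟩ := exists_decomp_aux P hP
  obtain ⟨V, mu, hV, hmu, hQd⟩ := exists_decomp_aux Q hQ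
  have hmP : mlog P = Uᵀ * diagonal (Real.log ∘ lam) * U := by
    rw [hPd, hmlog U lam hU]
  have hmQ : mlog Q = Vᵀ * diagonal (Real.log ∘ mu) * V := by
    rw [hQd, hmlog V mu hV]
  have hsym : (mlog P - mlog Q)ᵀ = mlog P - mlog Q := by
    rw [hmP, hmQ]
    simp [transpose_sub, transpose_mul, diagonal_transpose, Matrix.mul_assoc]
  rw [hsym, hmP, hmQ, hPd, hQd,
    master_aux U V hU hV (Real.log ∘ lam) (Real.log ∘ mu) lam mu]
  set S := U * Vᵀ with hS
  have termnn : ∀ i j, 0 ≤ (S i j)^2 *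
      (((Real.log ∘ lam) i - (Real.log ∘ mu) j) * (lam i - mu j)) :=
    fun i j => mul_nonneg (sq_nonneg _) (pos_log_aux (hlam i) (hmu j))
  by_contra hcon
  push_neg at hcon
  have hzero : (∑ i, ∑ j, (S i j)^2 *
      (((Real.log ∘ lam) i - (Real.log ∘ mu) j) * (lam i - mu j))) = 0 :=
    le_antisymm hcon (Finset.sum_nonneg fun i _ => Finset.sum_nonneg fun j _ => termnn i j)
  have h1 := (Finset.sum_eq_zero_iff_of_nonneg
    (fun i _ => Finset.sum_nonneg fun j _ => termnn i j)).mp hzero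
  have heach : ∀ i j, (S i j)^2 *
      (((Real.log ∘ lam) i - (Real.log ∘ mu) j) * (lam i - mu j)) = 0 := fun i j =>
    (Finset.sum_eq_zero_iff_of_nonneg (fun j _ => termnn i j)).mp
      (h1 i (Finset.mem_univ i)) j (Finset.mem_univ j)
  have hPQt : (P - Q)ᵀ = P - Q := by
    rw [hPd, hQd]
    simp [transpose_sub, transpose_mul, diagonal_transpose, Matrix.mul_assoc]
  have hF : ((P - Q)ᵀ * (P - Q)).trace = 0 := by
    rw [hPQt]
    nth_rewrite 1 [hPd, hQd]
    nth_rewrite 1 [hPd, hQd]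
    rw [master_aux U V hU hV lam mu lam mu, ← hS]
    refine Finset.sum_eq_zero fun i _ => Finset.sum_eq_zero fun j _ => ?_
    rcases mul_eq_zero.mp (heach i j) with h | h
    · rw [h, zero_mul]
    · have hlm : lam i = mu j := eq_of_log_aux (hlam i) (hmu j) h
      rw [hlm]; ring
  have hentries : ((P - Q)ᵀ * (P - Q)).trace = ∑ i, ∑ k, ((P - Q) k i)^2 := by
    simp [Matrix.trace, Matrix.diag, Matrix.mul_apply, pow_two]
  rw [hentries] at hF
  have hall := (Finset.sum_eq_zero_iff_of_nonneg
    (fun i _ => Finset.sum_nonneg fun k _ => sq_nonneg _)).mp hF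
  apply hne
  have hPQ0 : P - Q = 0 := by
    ext k i
    have := (Finset.sum_eq_zero_iff_of_nonneg (fun k _ => sq_nonneg ((P - Q) k i))).mp
      (hall i (Finset.mem_univ i)) k (Finset.mem_univ k)
    simpa [pow_eq_zero_iff] using this
  exact sub_eq_zero.mp hPQ0
end

section
/- For every positive definite symmetric matrix A and symmetric H, H̃, the operator L(H) = ∫₀¹ (t(A−𝟙)+𝟙)⁻¹ H (t(A−𝟙)+𝟙)⁻¹ dt (the Fréchet derivative of the principal matrix logarithm at A) is self-adjoint with respect to the Frobenius inner product and positive semi-definite: ⟨L(H), H̃⟩ = ⟨H, L(H̃)⟩ and ⟨L(H), H⟩ ≥ 0. -/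
open Matrix MeasureTheory

attribute [local instance] Matrix.normedAddCommGroup Matrix.normedSpace

namespace Stmt11Aux

variable {n : ℕ}

noncomputable instance : ENormedAddMonoid (Matrix (Fin n) (Fin n) ℝ) :=
  NormedAddGroup.toENormedAddMonoid

lemma posDef_smul {M : Matrix (Fin n) (Fin n) ℝ} {c : ℝ} (hc : 0 < c) (hM : M.PosDef) :
    (c • M).PosDef := by
  have hsym : Mᵀ = M := by
    simpa [Matrix.conjTranspose_eq_transpose_of_trivial] using hM.1.eq
  refine ⟨by simp [Matrix.IsHermitian, conjTranspose_smul,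
    Matrix.conjTranspose_eq_transpose_of_trivial, hsym], fun x hx => ?_⟩
  exact (hM.smul hc).2 hx

lemma posSemidef_smul_one {c : ℝ} (hc : 0 ≤ c) :
    ((c : ℝ) • (1 : Matrix (Fin n) (Fin n) ℝ)).PosSemidef := by
  refine ⟨by simp [Matrix.IsHermitian, conjTranspose_smul,
    Matrix.conjTranspose_eq_transpose_of_trivial], fun x => ?_⟩
  exact (PosSemidef.one.smul hc).2 x

lemma posDef_B (A : Matrix (Fin n) (Fin n) ℝ) (hA : A.PosDef) {t : ℝ}
    (ht : t ∈ Set.Icc (0:ℝ) 1) : (t • (A - 1) + 1).PosDef := by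
  have heq : t • (A - 1) + 1 = t • A + (1 - t) • (1 : Matrix (Fin n) (Fin n) ℝ) := by
    rw [smul_sub, sub_smul, one_smul]; abel
  rw [heq]
  rcases eq_or_lt_of_le ht.1 with h0 | h0
  · simpa [← h0] using Matrix.PosDef.one
  · exact (posDef_smul h0 hA).add_posSemidef (posSemidef_smul_one (by linarith [ht.2]))

lemma symm_B_inv (A : Matrix (Fin n) (Fin n) ℝ) (hA : A.PosDef) {t : ℝ}
    (ht : t ∈ Set.Icc (0:ℝ) 1) :
    ((t • (A - 1) + 1)⁻¹)ᵀ = (t • (A - 1) + 1)⁻¹ := by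
  have hB : (t • (A - 1) + 1)ᵀ = t • (A - 1) + 1 := by
    simpa [Matrix.conjTranspose_eq_transpose_of_trivial] using (posDef_B A hA ht).1.eq
  rw [Matrix.transpose_nonsing_inv, hB]

/-- the Frobenius pairing with a fixed matrix as a continuous linear map -/
noncomputable def traceCLM (Ht : Matrix (Fin n) (Fin n) ℝ) :
    Matrix (Fin n) (Fin n) ℝ →L[ℝ] ℝ :=
  LinearMap.toContinuousLinearMap
    { toFun := fun X => (Xᵀ * Ht).trace
      map_add' := fun X Y => by
        simp [Matrix.transpose_add, Matrix.add_mul]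
      map_smul' := fun c X => by
        simp [Matrix.transpose_smul, Matrix.smul_mul] }

lemma traceCLM_apply (Ht X : Matrix (Fin n) (Fin n) ℝ) :
    traceCLM Ht X = (Xᵀ * Ht).trace := rfl

lemma intervalIntegrable_f (A : Matrix (Fin n) (Fin n) ℝ) (hA : A.PosDef)
    (H : Matrix (Fin n) (Fin n) ℝ) :
    IntervalIntegrable (fun t : ℝ => (t • (A - 1) + 1)⁻¹ * H * (t • (A - 1) + 1)⁻¹)
      volume 0 1 := by
  have hB : Continuous (fun t : ℝ => t • (A - 1) + 1) := by continuity
  have hinv : ContinuousOn (fun t : ℝ => (t • (A - 1) + 1)⁻¹) (Set.Icc (0:ℝ) 1) := by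
    have heq : ∀ t ∈ Set.Icc (0:ℝ) 1, (t • (A - 1) + 1)⁻¹ =
        (t • (A - 1) + 1).det⁻¹ • (t • (A - 1) + 1).adjugate := fun t ht => by
      rw [Matrix.inv_def, Ring.inverse_eq_inv']
    refine ContinuousOn.congr ?_ heq
    refine ContinuousOn.smul (ContinuousOn.inv₀ (hB.matrix_det.continuousOn) ?_)
      (hB.matrix_adjugate.continuousOn)
    exact fun t ht => (posDef_B A hA ht).det_pos.ne'
  have : ContinuousOn (fun t : ℝ => (t • (A - 1) + 1)⁻¹ * H * (t • (A - 1) + 1)⁻¹)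
      (Set.Icc (0:ℝ) 1) := (hinv.mul continuousOn_const).mul hinv
  exact (this.mono (by rw [Set.uIcc_of_le zero_le_one])).intervalIntegrable

lemma trace_sq_nonneg (M : Matrix (Fin n) (Fin n) ℝ) (hM : Mᵀ = M) :
    0 ≤ (M * M).trace := by
  have h : (M * M).trace = ∑ i, ∑ j, M j i * M j i := by
    simp only [Matrix.trace, Matrix.diag, Matrix.mul_apply]
    refine Finset.sum_congr rfl fun i _ => Finset.sum_congr rfl fun j _ => ?_
    have hij : M i j = M j i := congrFun (congrFun hM j) i
    rw [hij]
  rw [h]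
  exact Finset.sum_nonneg fun i _ => Finset.sum_nonneg fun j _ => mul_self_nonneg _

end Stmt11Aux

open Stmt11Aux

/-- For positive definite symmetric `A`, the operator
`H ↦ ∫₀¹ (t(A−𝟙)+𝟙)⁻¹ H (t(A−𝟙)+𝟙)⁻¹ dt` (the Fréchet derivative of the principal matrix
logarithm at `A`) is self-adjoint w.r.t. the Frobenius inner product and positive
semi-definite. -/
theorem stmt_11 {n : ℕ} (A : Matrix (Fin n) (Fin n) ℝ) (hA : A.PosDef)
    (L : Matrix (Fin n) (Fin n) ℝ → Matrix (Fin n) (Fin n) ℝ)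
    (hL : ∀ H, L H = ∫ t in (0:ℝ)..1,
      (t • (A - 1) + 1)⁻¹ * H * (t • (A - 1) + 1)⁻¹) :
    (∀ H Ht : Matrix (Fin n) (Fin n) ℝ, H.IsSymm → Ht.IsSymm →
      ((L H)ᵀ * Ht).trace = (Hᵀ * (L Ht)).trace) ∧
    (∀ H : Matrix (Fin n) (Fin n) ℝ, H.IsSymm → 0 ≤ ((L H)ᵀ * H).trace) := by
  have key : ∀ (H Ht : Matrix (Fin n) (Fin n) ℝ),
      ((L H)ᵀ * Ht).trace = ∫ t in (0:ℝ)..1,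
        (((t • (A - 1) + 1)⁻¹ * H * (t • (A - 1) + 1)⁻¹)ᵀ * Ht).trace := by
    intro H Ht
    rw [hL H, ← traceCLM_apply]
    exact ((traceCLM Ht).intervalIntegral_comp_comm (intervalIntegrable_f A hA H)).symm
  constructor
  · intro H Ht hH hHt
    have hswap : (Hᵀ * L Ht).trace = ((L Ht)ᵀ * H).trace := by
      rw [← Matrix.trace_transpose (Hᵀ * L Ht), Matrix.transpose_mul,
        Matrix.transpose_transpose]
    rw [key H Ht, hswap, key Ht H]
    refine intervalIntegral.integral_congr fun t ht => ?_
    rw [Set.uIcc_of_le zero_le_one] at ht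
    set C := (t • (A - 1) + 1)⁻¹ with hCdef
    have hCs : Cᵀ = C := symm_B_inv A hA ht
    have hHs : Hᵀ = H := hH
    have hHts : Htᵀ = Ht := hHt
    have e1 : (C * H * C)ᵀ * Ht = (C * H) * (C * Ht) := by
      rw [Matrix.transpose_mul, Matrix.transpose_mul, hCs, hHs]
      simp [mul_assoc]
    have e2 : (C * Ht * C)ᵀ * H = (C * Ht) * (C * H) := by
      rw [Matrix.transpose_mul, Matrix.transpose_mul, hCs, hHts]
      simp [mul_assoc]
    rw [e1, e2, Matrix.trace_mul_comm]
  · intro H hH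
    rw [key H H]
    refine intervalIntegral.integral_nonneg zero_le_one fun t ht => ?_
    set C := (t • (A - 1) + 1)⁻¹ with hCdef
    have hCs : Cᵀ = C := symm_B_inv A hA ht
    have hCpd : C.PosDef := (posDef_B A hA ht).inv
    open scoped MatrixOrder in have hS : (CFC.sqrt C).PosSemidef := (CFC.sqrt_nonneg C).posSemidef
    open scoped MatrixOrder in set S := CFC.sqrt C with hSdef
    have hSS : S * S = C := open scoped MatrixOrder in CFC.sqrt_mul_sqrt_self C hCpd.posSemidef.nonneg
    have hSs : Sᵀ = S := by
      exact (by simpa [Matrix.conjTranspose_eq_transpose_of_trivial] using hS.1 : S.IsSymm)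
    have hHs : Hᵀ = H := hH
    have e1 : (C * H * C)ᵀ * H = S * ((S * H * S) * (S * H)) := by
      rw [Matrix.transpose_mul, Matrix.transpose_mul, hCs, hHs, ← hSS]
      simp [mul_assoc]
    have e2 : ((S * H * S) * (S * H)) * S = (S * H * S) * (S * H * S) := by
      simp [mul_assoc]
    have h1 : ((C * H * C)ᵀ * H).trace = ((S * H * S) * (S * H * S)).trace := by
      rw [e1, Matrix.trace_mul_comm, e2]
    rw [h1]
    apply trace_sq_nonneg
    rw [Matrix.transpose_mul, Matrix.transpose_mul, hSs, hHs, mul_assoc]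
end

section
/- The function g : PSym(2) → PSym(2), g(C) = det(C)·𝟙, is operator monotone but not Hilbert-space monotone: its derivative Dg[C].H = det(C) tr(HC⁻¹)·𝟙 is positive definite for every positive definite H, yet for A = diag(3,2) and B = diag(5,1) one has ⟨g(B) − g(A), B − A⟩ = −1 < 0. -/
open Matrix

attribute [local instance] Matrix.normedAddCommGroup Matrix.normedSpace

noncomputable def entryCLM (i j : Fin 2) : Matrix (Fin 2) (Fin 2) ℝ →L[ℝ] ℝ :=
  LinearMap.toContinuousLinearMap
    ((LinearMap.proj j).comp ((LinearMap.proj i).comp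
      (LinearMap.id : Matrix (Fin 2) (Fin 2) ℝ →ₗ[ℝ] _)))

lemma part1 (C : Matrix (Fin 2) (Fin 2) ℝ) (hC : C.PosDef) :
    ∃ L : Matrix (Fin 2) (Fin 2) ℝ →L[ℝ] Matrix (Fin 2) (Fin 2) ℝ,
      HasFDerivAt (fun X : Matrix (Fin 2) (Fin 2) ℝ =>
        X.det • (1 : Matrix (Fin 2) (Fin 2) ℝ)) L C ∧
      ∀ H, L H = (C.det * (H * C⁻¹).trace) • (1 : Matrix (Fin 2) (Fin 2) ℝ) := by
  have h1 : HasFDerivAt (fun X : Matrix (Fin 2) (Fin 2) ℝ => X 0 0 * X 1 1 - X 0 1 * X 1 0)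
      ((C 0 0 • entryCLM 1 1 + C 1 1 • entryCLM 0 0) -
       (C 0 1 • entryCLM 1 0 + C 1 0 • entryCLM 0 1)) C :=
    (((entryCLM 0 0).hasFDerivAt.mul (entryCLM 1 1).hasFDerivAt).sub
      ((entryCLM 0 1).hasFDerivAt.mul (entryCLM 1 0).hasFDerivAt))
  have h2 := h1.smul_const (1 : Matrix (Fin 2) (Fin 2) ℝ)
  refine ⟨(C 0 0 • entryCLM 1 1 + C 1 1 • entryCLM 0 0 -
      (C 0 1 • entryCLM 1 0 + C 1 0 • entryCLM 0 1)).smulRight 1, ?_, ?_⟩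
  · refine h2.congr_of_eventuallyEq (Filter.Eventually.of_forall fun X => ?_)
    show X.det • (1 : Matrix (Fin 2) (Fin 2) ℝ) = (X 0 0 * X 1 1 - X 0 1 * X 1 0) • 1
    rw [Matrix.det_fin_two]
  · intro H
    have hdet : C.det ≠ 0 := hC.det_pos.ne'
    have hCinv : C⁻¹ = C.det⁻¹ • C.adjugate := by
      rw [Matrix.inv_def, Ring.inverse_eq_inv]
    simp only [ContinuousLinearMap.smulRight_apply, ContinuousLinearMap.sub_apply,
      ContinuousLinearMap.add_apply, ContinuousLinearMap.smul_apply]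
    congr 1
    rw [hCinv, Matrix.mul_smul, Matrix.trace_smul, Matrix.adjugate_fin_two,
      Matrix.trace_fin_two, Matrix.mul_apply, Matrix.mul_apply]
    simp only [Fin.sum_univ_two, Matrix.of_apply, Matrix.cons_val', Matrix.cons_val_zero,
      Matrix.cons_val_one, Matrix.head_cons, Matrix.head_fin_const, Matrix.empty_val',
      Matrix.cons_val_fin_one]
    show C 0 0 * H 1 1 + C 1 1 * H 0 0 - (C 0 1 * H 1 0 + C 1 0 * H 0 1) = _
    field_simp
    linear_combination (-(C 0 0 * H 1 1 + C 1 1 * H 0 0 - C 0 1 * H 1 0 - C 1 0 * H 0 1)) *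
      mul_inv_cancel₀ hdet

lemma diag_pos {M : Matrix (Fin 2) (Fin 2) ℝ} (hM : M.PosDef) (i : Fin 2) : 0 < M i i := by
  have := hM.dotProduct_mulVec_pos (x := Pi.single i 1) (by simp [Function.ne_iff])
  simpa [dotProduct, mulVec, Pi.single_apply, Finset.sum_ite_eq] using this

lemma symm_entry {M : Matrix (Fin 2) (Fin 2) ℝ} (hM : M.IsHermitian) (i j : Fin 2) :
    M i j = M j i := by
  conv_lhs => rw [← hM]
  simp [conjTranspose_apply]

lemma trace_mul_pos {H K : Matrix (Fin 2) (Fin 2) ℝ} (hH : H.PosDef) (hK : K.PosDef) :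
    0 < (H * K).trace := by
  have hdH := hH.det_pos
  have hdK := hK.det_pos
  rw [Matrix.det_fin_two] at hdH hdK
  have h10 := symm_entry hH.isHermitian 1 0
  have k10 := symm_entry hK.isHermitian 1 0
  have a := diag_pos hH 0; have b := diag_pos hH 1
  have p := diag_pos hK 0; have q := diag_pos hK 1
  rw [Matrix.trace_fin_two]
  simp only [Matrix.mul_apply, Fin.sum_univ_two]
  simp only [h10, k10] at hdH hdK ⊢
  nlinarith [sq_nonneg (H 0 0 * K 0 0 - H 1 1 * K 1 1), sq_nonneg (H 0 1 * K 0 1),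
    mul_pos a p, mul_pos b q, mul_pos hdH hdK,
    sq_nonneg (H 0 0 * K 0 0 + H 1 1 * K 1 1 + 2 * (H 0 1 * K 0 1))]

/-- The function `g(C) = det(C)·𝟙` on 2×2 positive definite symmetric matrices is operator
monotone (its derivative `H ↦ det(C) tr(H C⁻¹)·𝟙` is positive definite for positive
definite `H`), but not Hilbert-space monotone: for `A = diag(3,2)`, `B = diag(5,1)` one
has `⟨g(B) − g(A), B − A⟩ = −1 < 0`. -/
theorem stmt_16 :
    (∀ C : Matrix (Fin 2) (Fin 2) ℝ, C.PosDef →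
      ∃ L : Matrix (Fin 2) (Fin 2) ℝ →L[ℝ] Matrix (Fin 2) (Fin 2) ℝ,
        HasFDerivAt (fun X : Matrix (Fin 2) (Fin 2) ℝ =>
          X.det • (1 : Matrix (Fin 2) (Fin 2) ℝ)) L C ∧
        ∀ H, L H = (C.det * (H * C⁻¹).trace) • (1 : Matrix (Fin 2) (Fin 2) ℝ)) ∧
    (∀ C H : Matrix (Fin 2) (Fin 2) ℝ, C.PosDef → H.PosDef →
      ((C.det * (H * C⁻¹).trace) • (1 : Matrix (Fin 2) (Fin 2) ℝ)).PosDef) ∧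
    (((Matrix.diagonal ![(5:ℝ), 1]).det • (1 : Matrix (Fin 2) (Fin 2) ℝ) -
        (Matrix.diagonal ![(3:ℝ), 2]).det • (1 : Matrix (Fin 2) (Fin 2) ℝ))ᵀ *
      (Matrix.diagonal ![(5:ℝ), 1] - Matrix.diagonal ![(3:ℝ), 2])).trace = -1 ∧
    (-1 : ℝ) < 0 := by
  refine ⟨part1, ?_, ?_, by norm_num⟩
  · intro C H hC hH
    have hc : 0 < C.det * (H * C⁻¹).trace :=
      mul_pos hC.det_pos (trace_mul_pos hH hC.inv)
    have : (C.det * (H * C⁻¹).trace) • (1 : Matrix (Fin 2) (Fin 2) ℝ) =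
        Matrix.diagonal (fun _ => C.det * (H * C⁻¹).trace) := by
      ext i j
      simp [Matrix.one_apply, Matrix.diagonal, Matrix.smul_apply]
    rw [this]
    exact Matrix.PosDef.diagonal fun _ => hc
  · rw [Matrix.trace_fin_two]
    simp [Matrix.mul_apply, Fin.sum_univ_two, Matrix.det_fin_two, Matrix.diagonal,
      Matrix.smul_apply, Matrix.one_apply, Matrix.transpose_apply, Matrix.sub_apply]
    norm_num
end
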